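/- arXiv:2405.05157 — 4 statements merged into one kernel-verified Lean document; each statement's English description precedes it below -/
import Mathlib

section
/- Fix dimensions n_x, n_z, p and, for each j ≥ 1, deterministic matrices A_j, B_j ∈ ℝ^{n_x×p}, H_j ∈ ℝ^{n_z×n_x}, E_j, F_j ∈ ℝ^{n_z×n_z}, symmetric invertible matrices Σ^η_j ∈ ℝ^{n_z×n_z}, and scalars γ̄_j, λ̄_j ∈ ℝ. Define Ψ^x_j ∈ ℝ^{p×n_z} and Ψ^v_j ∈ ℝ^{n_z×n_z} recursively by Ψ^x_j = (1 − λ̄_j)[ γ̄_j B_j^T H_j^T − Σ_{i=1}^{j−1} Ψ^x_i (Σ^η_i)^{−1} (γ̄_j H_j A_j Ψ^x_i + E_j Ψ^v_i)^T ] and Ψ^v_j = (1 − λ̄_j)[ F_j^T − Σ_{i=1}^{j−1} Ψ^v_i (Σ^η_i)^{−1} (γ̄_j H_j A_j Ψ^x_i + E_j Ψ^v_i)^T ]. Suppose families of matrices S^x_{k,j} ∈ ℝ^{n_x×n_z} and S^v_{k,j} ∈ ℝ^{n_z×n_z}, defined for 1 ≤ j ≤ k, satisfy S^x_{k,j} =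 (1 − λ̄_j)[ γ̄_j A_k B_j^T H_j^T − Σ_{i=1}^{j−1} S^x_{k,i} (Σ^η_i)^{−1} (γ̄_j H_j S^x_{j,i} + S^v_{j,i})^T ] and S^v_{k,j} = (1 − λ̄_j)[ E_k F_j^T − Σ_{i=1}^{j−1} S^v_{k,i} (Σ^η_i)^{−1} (γ̄_j H_j S^x_{j,i} + S^v_{j,i})^T ]. Then for all 1 ≤ j ≤ k, S^x_{k,j} = A_k Ψ^x_j and S^v_{k,j} = E_k Ψ^v_j. -/
open Matrix Finset

/-- The cross-covariance coefficient families `S^x_{k,j}`, `S^v_{k,j}` satisfying the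
stated recursions factorize through the signal and noise covariance factors:
`S^x_{k,j} = A_k Ψ^x_j` and `S^v_{k,j} = E_k Ψ^v_j` for all `1 ≤ j ≤ k`. -/
theorem filter_coefficient_factorization
    {nx nz p : ℕ}
    (A B : ℕ → Matrix (Fin nx) (Fin p) ℝ) (H : ℕ → Matrix (Fin nz) (Fin nx) ℝ)
    (E F : ℕ → Matrix (Fin nz) (Fin nz) ℝ) (Sη : ℕ → Matrix (Fin nz) (Fin nz) ℝ)
    (hsym : ∀ j, (Sη j)ᵀ = Sη j) (hinv : ∀ j, IsUnit (Sη j))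
    (γbar lbar : ℕ → ℝ)
    (Ψx : ℕ → Matrix (Fin p) (Fin nz) ℝ) (Ψv : ℕ → Matrix (Fin nz) (Fin nz) ℝ)
    (hΨx : ∀ j, 1 ≤ j →
      Ψx j = (1 - lbar j) •
        (γbar j • ((B j)ᵀ * (H j)ᵀ)
          - ∑ i ∈ Ico 1 j,
              Ψx i * (Sη i)⁻¹ * (γbar j • (H j * A j * Ψx i) + E j * Ψv i)ᵀ))
    (hΨv : ∀ j, 1 ≤ j →
      Ψv j = (1 - lbar j) •
        ((F j)ᵀ
          - ∑ i ∈ Ico 1 j,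
              Ψv i * (Sη i)⁻¹ * (γbar j • (H j * A j * Ψx i) + E j * Ψv i)ᵀ))
    (Sx : ℕ → ℕ → Matrix (Fin nx) (Fin nz) ℝ)
    (Sv : ℕ → ℕ → Matrix (Fin nz) (Fin nz) ℝ)
    (hSx : ∀ k j, 1 ≤ j → j ≤ k →
      Sx k j = (1 - lbar j) •
        (γbar j • (A k * (B j)ᵀ * (H j)ᵀ)
          - ∑ i ∈ Ico 1 j,
              Sx k i * (Sη i)⁻¹ * (γbar j • (H j * Sx j i) + Sv j i)ᵀ))
    (hSv : ∀ k j, 1 ≤ j → j ≤ k →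
      Sv k j = (1 - lbar j) •
        (E k * (F j)ᵀ
          - ∑ i ∈ Ico 1 j,
              Sv k i * (Sη i)⁻¹ * (γbar j • (H j * Sx j i) + Sv j i)ᵀ)) :
    ∀ k j, 1 ≤ j → j ≤ k → Sx k j = A k * Ψx j ∧ Sv k j = E k * Ψv j := by
  intro k j
  induction j using Nat.strong_induction_on generalizing k with
  | _ j IH =>
    intro h1 hk
    have hsum : ∀ i ∈ Ico 1 j,
        (γbar j • (H j * Sx j i) + Sv j i) = (γbar j • (H j * A j * Ψx i) + E j * Ψv i) := by
      intro i hi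
      obtain ⟨hi1, hi2⟩ := mem_Ico.mp hi
      obtain ⟨hx, hv⟩ := IH i hi2 j hi1 hi2.le
      rw [hx, hv, Matrix.mul_assoc]
    constructor
    · rw [hSx k j h1 hk, hΨx j h1, Matrix.mul_smul, Matrix.mul_sub, Matrix.mul_smul,
        Matrix.mul_sum]
      congr 1
      congr 1
      · rw [← Matrix.mul_assoc]
      · refine Finset.sum_congr rfl fun i hi => ?_
        obtain ⟨hi1, hi2⟩ := mem_Ico.mp hi
        obtain ⟨hx, _⟩ := IH i hi2 k hi1 (hi2.le.trans hk)
        rw [hx, hsum i hi]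
        simp [Matrix.mul_assoc]
    · rw [hSv k j h1 hk, hΨv j h1, Matrix.mul_smul, Matrix.mul_sub, Matrix.mul_sum]
      congr 2
      refine Finset.sum_congr rfl fun i hi => ?_
      obtain ⟨hi1, hi2⟩ := mem_Ico.mp hi
      obtain ⟨_, hv⟩ := IH i hi2 k hi1 (hi2.le.trans hk)
      rw [hv, hsum i hi]
      simp [Matrix.mul_assoc]
end

section
/- Fix k ≥ 1 and, in addition to the data of the filtering recursions, set Δ^x_L = γ̄_L H_L A_L and Δ^v_L = E_L. Suppose a family of matrices S^x_{k,L} ∈ ℝ^{n_x×n_z} satisfies S^x_{k,i} = A_k Ψ^x_i for 1 ≤ i ≤ k and, for every L > k, S^x_{k,L} = (1 − λ̄_L)[ B_k (Δ^x_L)^T − Σ_{i=1}^{L−1} S^x_{k,i} (Σ^η_i)^{−1} (Δ^x_L Ψ^x_i + Δ^v_L Ψ^v_i)^T ]. Define M^a_{k,L} = Σ_{i=1}^{L} S^x_{k,i} (Σ^η_i)^{−1} (Ψ^a_i)^T for a ∈ {x, v}. Then: (i) M^a_{k,k} = A_k T^{xa}_k, where T^{xa}_k = Σ_{j=1}^{k}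 Ψ^x_j (Σ^η_j)^{−1} (Ψ^a_j)^T; (ii) for every L > k, S^x_{k,L} = (1 − λ̄_L)[ (B_k − M^x_{k,L−1}) (Δ^x_L)^T − M^v_{k,L−1} (Δ^v_L)^T ]; and (iii) for every L > k, M^a_{k,L} = M^a_{k,L−1} + S^x_{k,L} (Σ^η_L)^{−1} (Ψ^a_L)^T. -/
open Matrix Finset

/-- Algebraic content of the fixed-point smoothing algorithm. For a fixed `k ≥ 1`,
with `Δ^x_L = γ̄_L H_L A_L`, `Δ^v_L = E_L`, a family `S_L = S^x_{k,L}` satisfying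
`S_i = A_k Ψ^x_i` for `1 ≤ i ≤ k` and the stated recursion for `L > k`, and
`M^a_{k,L} = ∑_{i=1}^{L} S_i (Σ^η_i)⁻¹ (Ψ^a_i)ᵀ`:
(i) `M^a_{k,k} = A_k T^{xa}_k`;
(ii) for `L > k`, `S_L = (1 - λ̄_L)[(B_k - M^x_{k,L-1})(Δ^x_L)ᵀ - M^v_{k,L-1}(Δ^v_L)ᵀ]`;
(iii) for `L > k`, `M^a_{k,L} = M^a_{k,L-1} + S_L (Σ^η_L)⁻¹ (Ψ^a_L)ᵀ`. -/
theorem smoother_recursion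
    {nx nz p : ℕ} (k : ℕ) (hk : 1 ≤ k)
    (A B : ℕ → Matrix (Fin nx) (Fin p) ℝ) (H : ℕ → Matrix (Fin nz) (Fin nx) ℝ)
    (E F : ℕ → Matrix (Fin nz) (Fin nz) ℝ) (Sη : ℕ → Matrix (Fin nz) (Fin nz) ℝ)
    (hsym : ∀ j, (Sη j)ᵀ = Sη j) (hinv : ∀ j, IsUnit (Sη j))
    (γbar lbar : ℕ → ℝ)
    (Ψx : ℕ → Matrix (Fin p) (Fin nz) ℝ) (Ψv : ℕ → Matrix (Fin nz) (Fin nz) ℝ)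
    (hΨx : ∀ j, 1 ≤ j →
      Ψx j = (1 - lbar j) •
        (γbar j • ((B j)ᵀ * (H j)ᵀ)
          - ∑ i ∈ Ico 1 j,
              Ψx i * (Sη i)⁻¹ * (γbar j • (H j * A j * Ψx i) + E j * Ψv i)ᵀ))
    (hΨv : ∀ j, 1 ≤ j →
      Ψv j = (1 - lbar j) •
        ((F j)ᵀ
          - ∑ i ∈ Ico 1 j,
              Ψv i * (Sη i)⁻¹ * (γbar j • (H j * A j * Ψx i) + E j * Ψv i)ᵀ))
    (S : ℕ → Matrix (Fin nx) (Fin nz) ℝ)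
    (hSfil : ∀ i, 1 ≤ i → i ≤ k → S i = A k * Ψx i)
    (hSrec : ∀ L, k < L →
      S L = (1 - lbar L) •
        (B k * (γbar L • (H L * A L))ᵀ
          - ∑ i ∈ Ico 1 L,
              S i * (Sη i)⁻¹ * ((γbar L • (H L * A L)) * Ψx i + E L * Ψv i)ᵀ))
    (Mx : ℕ → Matrix (Fin nx) (Fin p) ℝ) (Mv : ℕ → Matrix (Fin nx) (Fin nz) ℝ)
    (hMx : ∀ L, Mx L = ∑ i ∈ Icc 1 L, S i * (Sη i)⁻¹ * (Ψx i)ᵀ)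
    (hMv : ∀ L, Mv L = ∑ i ∈ Icc 1 L, S i * (Sη i)⁻¹ * (Ψv i)ᵀ) :
    (Mx k = A k * ∑ j ∈ Icc 1 k, Ψx j * (Sη j)⁻¹ * (Ψx j)ᵀ
      ∧ Mv k = A k * ∑ j ∈ Icc 1 k, Ψx j * (Sη j)⁻¹ * (Ψv j)ᵀ)
    ∧ (∀ L, k < L →
        S L = (1 - lbar L) •
          ((B k - Mx (L - 1)) * (γbar L • (H L * A L))ᵀ - Mv (L - 1) * (E L)ᵀ))
    ∧ (∀ L, k < L →
        Mx L = Mx (L - 1) + S L * (Sη L)⁻¹ * (Ψx L)ᵀ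
          ∧ Mv L = Mv (L - 1) + S L * (Sη L)⁻¹ * (Ψv L)ᵀ) := by

  have key : ∀ L, k < L → Ico 1 L = Icc 1 (L - 1) := by
    intro L hL
    have : L - 1 + 1 = L := by omega
    rw [← Finset.Ico_add_one_right_eq_Icc]
    congr 1
    omega
  refine ⟨⟨?_, ?_⟩, ?_, ?_⟩
  · rw [hMx, Matrix.mul_sum]
    refine Finset.sum_congr rfl fun i hi => ?_
    simp only [Finset.mem_Icc] at hi
    rw [hSfil i hi.1 hi.2]; simp [Matrix.mul_assoc]
  · rw [hMv, Matrix.mul_sum]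
    refine Finset.sum_congr rfl fun i hi => ?_
    simp only [Finset.mem_Icc] at hi
    rw [hSfil i hi.1 hi.2]; simp [Matrix.mul_assoc]
  · intro L hL
    rw [hSrec L hL, hMx, hMv, ← key L hL]
    congr 1
    have : ∀ i, S i * (Sη i)⁻¹ * ((γbar L • (H L * A L)) * Ψx i + E L * Ψv i)ᵀ
        = S i * (Sη i)⁻¹ * (Ψx i)ᵀ * (γbar L • (H L * A L))ᵀ
          + S i * (Sη i)⁻¹ * (Ψv i)ᵀ * (E L)ᵀ := by
      intro i
      rw [Matrix.transpose_add, Matrix.mul_add, Matrix.transpose_mul,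
        Matrix.transpose_mul, ← Matrix.mul_assoc, ← Matrix.mul_assoc]
    simp only [this, Finset.sum_add_distrib, ← Matrix.sum_mul, Matrix.sub_mul]
    abel
  · intro L hL
    have h1 : 1 ≤ L - 1 + 1 := by omega
    have h2 : L - 1 + 1 = L := by omega
    constructor
    · rw [hMx, hMx, ← h2, Finset.sum_Icc_succ_top h1, Nat.add_sub_cancel]
    · rw [hMv, hMv, ← h2, Finset.sum_Icc_succ_top h1, Nat.add_sub_cancel]
end

section
/- Let (Ω, F, P) be a probability space and G ⊆ F a sub-σ-algebra. Let z, w be square-integrable real random variables with E[w] = 0, and let λ be a Bernoulli random variable with mean λ̄ which is independent of the σ-algebra generated by G together with z and w; assume also that w is independent of G. Let S be a closed linear subspace of L²(Ω, F, P) all of whose elements are G-measurable. Then the orthogonal projection of y := (1 − λ) z + λ w onto S equals (1 − λ̄) times the orthogonal projection of z onto S. -/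
open MeasureTheory ProbabilityTheory

lemma integrable_mul_L2' {Ω : Type*} {mΩ : MeasurableSpace Ω} {μ : Measure Ω} {φ ψ : Ω → ℝ}
    (hφ : MemLp φ 2 μ) (hψ : MemLp ψ 2 μ) : Integrable (fun ω => φ ω * ψ ω) μ := by
  have h := L2.integrable_inner (𝕜 := ℝ) (hφ.toLp φ) (hψ.toLp ψ)
  refine h.congr ?_
  filter_upwards [hφ.coeFn_toLp, hψ.coeFn_toLp] with ω h1 h2
  simp [h1, h2, RCLike.inner_apply, mul_comm]

lemma L2_real_inner_eq {Ω : Type*} {mΩ : MeasurableSpace Ω} {μ : Measure Ω}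
    (f g : Lp ℝ 2 μ) : (inner ℝ f g : ℝ) = ∫ ω, (f : Ω → ℝ) ω * (g : Ω → ℝ) ω ∂μ := by
  rw [L2.inner_def]
  congr 1
  funext a; simp [RCLike.inner_apply, mul_comm]

lemma lam_aesm {Ω : Type*} (m'' : MeasurableSpace Ω) {mΩ : MeasurableSpace Ω}
    (μ : Measure Ω) [IsProbabilityMeasure μ]
    (lam q h : Ω → ℝ)
    (hber : ∀ ω, lam ω = 0 ∨ lam ω = 1)
    (hq : AEStronglyMeasurable q μ) (hh : AEStronglyMeasurable h μ)
    (hh_eq : ∀ ω, h ω = lam ω * q ω)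
    (hq_m : Measurable[m''] q)
    (hindep : Indep (MeasurableSpace.comap lam inferInstance) m'' μ)
    (hq_ne : ¬ (q =ᵐ[μ] 0)) :
    AEStronglyMeasurable lam μ := by
  classical
  set A : Set Ω := lam ⁻¹' {1} with hA
  have hnotA : ∀ ω, ω ∉ A ↔ lam ω = 0 := by
    intro ω; rcases hber ω with hl | hl <;> simp [hA, hl]
  have hA_comap : MeasurableSet[MeasurableSpace.comap lam inferInstance] A :=
    ⟨{1}, measurableSet_singleton 1, rfl⟩
  have hAc_comap : MeasurableSet[MeasurableSpace.comap lam inferInstance] Aᶜ :=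
    ⟨({1} : Set ℝ)ᶜ, (measurableSet_singleton 1).compl, by simp [hA]⟩
  set C : Set Ω := {ω | q ω = 0} with hC
  have hCc_m : MeasurableSet[m''] Cᶜ := (hq_m (measurableSet_singleton 0)).compl
  have hq₀ : q =ᵐ[μ] hq.mk q := hq.ae_eq_mk
  have hh₀ : h =ᵐ[μ] hh.mk h := hh.ae_eq_mk
  have hq₀m : Measurable (hq.mk q) := hq.measurable_mk
  have hh₀m : Measurable (hh.mk h) := hh.measurable_mk
  set M₁ : Set Ω := {ω | hq.mk q ω ≠ 0 ∧ hh.mk h ω = hq.mk q ω} with hM₁def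
  set M₀ : Set Ω := {ω | hq.mk q ω ≠ 0 ∧ hh.mk h ω = 0} with hM₀def
  have hM₁m : MeasurableSet M₁ :=
    ((hq₀m (measurableSet_singleton 0)).compl).inter (measurableSet_eq_fun hh₀m hq₀m)
  have hM₀m : MeasurableSet M₀ :=
    ((hq₀m (measurableSet_singleton 0)).compl).inter (hh₀m (measurableSet_singleton 0))
  have hM₁ : (A ∩ Cᶜ : Set Ω) =ᵐ[μ] M₁ := by
    rw [Filter.eventuallyEq_set]
    filter_upwards [hq₀, hh₀] with ω e1 e2
    simp only [Set.mem_inter_iff, Set.mem_compl_iff, Set.mem_preimage,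
      Set.mem_singleton_iff, Set.mem_setOf_eq]
    constructor
    · rintro ⟨hA1, hC1⟩
      have hl : lam ω = 1 := hA1
      have hq0 : q ω ≠ 0 := hC1
      exact ⟨by rw [← e1]; exact hq0, by rw [← e1, ← e2, hh_eq ω, hl, one_mul]⟩
    · rintro ⟨h1, h2⟩
      have hq0 : q ω ≠ 0 := by rw [e1]; exact h1
      have heq : lam ω * q ω = q ω := by rw [← hh_eq ω, e2, h2, ← e1]
      have hl : lam ω = 1 := by
        rcases hber ω with h0 | h1' 
        · exfalso; rw [h0, zero_mul] at heq; exact hq0 heq.symm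
        · exact h1'
      exact ⟨hl, hq0⟩
  have hM₀ : (Aᶜ ∩ Cᶜ : Set Ω) =ᵐ[μ] M₀ := by
    rw [Filter.eventuallyEq_set]
    filter_upwards [hq₀, hh₀] with ω e1 e2
    simp only [Set.mem_inter_iff, Set.mem_compl_iff, Set.mem_preimage,
      Set.mem_singleton_iff, Set.mem_setOf_eq]
    constructor
    · rintro ⟨hA0, hC1⟩
      have hl : lam ω = 0 := by
        rcases hber ω with h0 | h1
        · exact h0
        · exact absurd h1 hA0
      have hq0 : q ω ≠ 0 := hC1
      exact ⟨by rw [← e1]; exact hq0, by rw [← e2, hh_eq ω, hl, zero_mul]⟩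
    · rintro ⟨h1, h2⟩
      have hq0 : q ω ≠ 0 := by rw [e1]; exact h1
      have heq : lam ω * q ω = 0 := by rw [← hh_eq ω, e2]; exact h2
      have hl : lam ω = 0 := by
        rcases mul_eq_zero.mp heq with h' | h'
        · exact h'
        · exact absurd h' hq0
      refine ⟨?_, hq0⟩
      intro hmem
      rw [hmem] at hl; norm_num at hl
  have hdisj : Disjoint M₁ M₀ := by
    rw [Set.disjoint_iff]
    rintro ω ⟨⟨h1, h2⟩, ⟨h3, h4⟩⟩
    exact absurd (h2.symm.trans h4) h1
  have hunion : (Cᶜ : Set Ω) =ᵐ[μ] (M₁ ∪ M₀ : Set Ω) := by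
    have : ((A ∩ Cᶜ) ∪ (Aᶜ ∩ Cᶜ) : Set Ω) = Cᶜ := by
      rw [← Set.union_inter_distrib_right, Set.union_compl_self, Set.univ_inter]
    rw [← this]; exact Filter.EventuallyEq.union hM₁ hM₀
  have hInd := (Indep_iff _ _ _).mp hindep
  have hACc : μ (A ∩ Cᶜ) = μ A * μ Cᶜ := hInd A Cᶜ hA_comap hCc_m
  have hAcCc : μ (Aᶜ ∩ Cᶜ) = μ Aᶜ * μ Cᶜ := hInd Aᶜ Cᶜ hAc_comap hCc_m
  have hCc_eq : μ Cᶜ = (μ A + μ Aᶜ) * μ Cᶜ := by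
    calc μ Cᶜ = μ (M₁ ∪ M₀) := measure_congr hunion
      _ = μ M₁ + μ M₀ := measure_union hdisj hM₀m
      _ = μ (A ∩ Cᶜ) + μ (Aᶜ ∩ Cᶜ) := by
          rw [measure_congr hM₁, measure_congr hM₀]
      _ = (μ A + μ Aᶜ) * μ Cᶜ := by rw [hACc, hAcCc, add_mul]
  have hCc_ne : μ Cᶜ ≠ 0 := by
    intro h0
    apply hq_ne
    have hae : ∀ᵐ ω ∂μ, q ω = 0 := by
      rw [ae_iff]
      convert h0 using 2
      ext ω; simp [hC]
    filter_upwards [hae] with ω hω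
    simpa using hω
  have hsum : μ A + μ Aᶜ = 1 := by
    have h1 : (μ A + μ Aᶜ) * μ Cᶜ = 1 * μ Cᶜ := by rw [one_mul, ← hCc_eq]
    exact (ENNReal.mul_left_inj hCc_ne (measure_ne_top μ _)).mp h1
  have hT := measurableSet_toMeasurable μ A
  have hT' := measurableSet_toMeasurable μ Aᶜ
  have hunivT : toMeasurable μ A ∪ toMeasurable μ Aᶜ = Set.univ := by
    apply Set.eq_univ_of_univ_subset
    intro ω _
    by_cases hω : ω ∈ A
    · exact Or.inl (subset_toMeasurable μ A hω)
    · exact Or.inr (subset_toMeasurable μ Aᶜ hω)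
  have hinter : μ (toMeasurable μ A ∩ toMeasurable μ Aᶜ) = 0 := by
    have h1 : μ (toMeasurable μ A ∪ toMeasurable μ Aᶜ)
        + μ (toMeasurable μ A ∩ toMeasurable μ Aᶜ)
        = μ (toMeasurable μ A) + μ (toMeasurable μ Aᶜ) := measure_union_add_inter _ hT'
    rw [hunivT, measure_univ, measure_toMeasurable, measure_toMeasurable, hsum] at h1
    have h2 : (1:ENNReal) + μ (toMeasurable μ A ∩ toMeasurable μ Aᶜ) = 1 + 0 := by
      rw [add_zero]; exact h1
    exact (ENNReal.add_right_inj (by simp)).mp h2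
  have hTA : A =ᵐ[μ] toMeasurable μ A := by
    rw [MeasureTheory.ae_eq_set]
    constructor
    · rw [Set.diff_eq_empty.mpr (subset_toMeasurable μ A)]
      exact measure_empty
    · refine measure_mono_null ?_ hinter
      rintro ω ⟨hωT, hωA⟩
      exact ⟨hωT, subset_toMeasurable μ Aᶜ hωA⟩
  refine ⟨(toMeasurable μ A).indicator (fun _ => (1:ℝ)), ?_, ?_⟩
  · exact (measurable_const.indicator hT).stronglyMeasurable
  · have hlam_ind : lam = A.indicator (fun _ => (1:ℝ)) := by
      funext ω
      by_cases hω : ω ∈ A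
      · rw [Set.indicator_of_mem hω]
        simpa [hA] using hω
      · rw [Set.indicator_of_notMem hω]
        exact (hnotA ω).mp hω
    rw [hlam_ind]
    exact indicator_ae_eq_of_ae_eq_set hTA

lemma indep_integral_mul {Ω : Type*} (m'' : MeasurableSpace Ω) {mΩ : MeasurableSpace Ω}
    (μ : Measure Ω) [IsProbabilityMeasure μ] (lam g : Ω → ℝ)
    (hlam : AEStronglyMeasurable lam μ) (hg : AEStronglyMeasurable g μ)
    (hg_m : Measurable[m''] g)
    (hindep : Indep (MeasurableSpace.comap lam inferInstance) m'' μ) :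
    ∫ ω, lam ω * g ω ∂μ = (∫ ω, lam ω ∂μ) * ∫ ω, g ω ∂μ := by
  have hif : IndepFun lam g μ := by
    rw [IndepFun_iff]
    intro t1 t2 h1 h2
    exact (Indep_iff _ _ _).mp hindep t1 t2 h1
      (measurable_iff_comap_le.mp hg_m t2 h2)
  have h2 := hif.integral_mul_eq_mul_integral hlam hg
  simpa [Pi.mul_apply] using h2

/-- Let `G ⊆ F` be a sub-σ-algebra, `z`, `w` square-integrable with `E[w] = 0`, and `λ`
a Bernoulli variable with mean `λ̄` independent of the σ-algebra generated by `G`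
together with `z` and `w`; let `w` be independent of `G`. For every closed linear
subspace `K` of `L²` all of whose elements are `G`-measurable, the orthogonal
projection of `y = (1 - λ) z + λ w` onto `K` equals `(1 - λ̄)` times the orthogonal
projection of `z` onto `K`. -/
theorem projection_attacked_observation
    {Ω : Type*} [mΩ : MeasurableSpace Ω] (μ : Measure Ω) [IsProbabilityMeasure μ]
    (G : MeasurableSpace Ω) (hG : G ≤ mΩ)
    (z w lam : Ω → ℝ) (lbar : ℝ)
    (hz : MemLp z 2 μ) (hw : MemLp w 2 μ)
    (hwmean : ∫ ω, w ω ∂μ = 0)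
    (hber : ∀ ω, lam ω = 0 ∨ lam ω = 1)
    (hlmean : ∫ ω, lam ω ∂μ = lbar)
    (hlam_indep : Indep (MeasurableSpace.comap lam inferInstance)
      (G ⊔ MeasurableSpace.comap z inferInstance ⊔ MeasurableSpace.comap w inferInstance) μ)
    (hw_G : Indep (MeasurableSpace.comap w inferInstance) G μ)
    (K : Submodule ℝ (Lp ℝ 2 μ)) [CompleteSpace K]
    (hK : ∀ f ∈ K, AEStronglyMeasurable[G] (f : Ω → ℝ) μ)
    (hy : MemLp (fun ω => (1 - lam ω) * z ω + lam ω * w ω) 2 μ) :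
    Submodule.orthogonalProjectionOnto K (hy.toLp _)
      = (1 - lbar) • Submodule.orthogonalProjectionOnto K (hz.toLp z) := by
  classical
  have hG_le : G ≤ (G ⊔ MeasurableSpace.comap z inferInstance
      ⊔ MeasurableSpace.comap w inferInstance) := le_trans le_sup_left le_sup_left
  have hz_m' : Measurable[(G ⊔ MeasurableSpace.comap z inferInstance
      ⊔ MeasurableSpace.comap w inferInstance)] z :=
    measurable_iff_comap_le.mpr (le_trans le_sup_right le_sup_left)
  have hw_m' : Measurable[(G ⊔ MeasurableSpace.comap z inferInstance
      ⊔ MeasurableSpace.comap w inferInstance)] w := measurable_iff_comap_le.mpr le_sup_right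
  have hq_m' : Measurable[(G ⊔ MeasurableSpace.comap z inferInstance
      ⊔ MeasurableSpace.comap w inferInstance)] (fun ω => w ω - z ω) := hw_m'.sub hz_m'
  have hq2 : MemLp (fun ω => w ω - z ω) 2 μ := hw.sub hz
  have hh_eq : (fun ω => lam ω * (w ω - z ω))
      = fun ω => ((1 - lam ω) * z ω + lam ω * w ω) - z ω := by
    funext ω; ring
  have hh2 : MemLp (fun ω => lam ω * (w ω - z ω)) 2 μ := by rw [hh_eq]; exact hy.sub hz
  -- The key integral identity
  have key : ∀ f : Lp ℝ 2 μ, f ∈ K →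
      (∫ ω, ((1 - lam ω) * z ω + lam ω * w ω) * (f : Ω → ℝ) ω ∂μ)
        = (1 - lbar) * ∫ ω, z ω * (f : Ω → ℝ) ω ∂μ := by
    intro f hfK
    obtain ⟨f', hf'sm, hff'⟩ := hK f hfK
    have hf'measG : Measurable[G] f' := hf'sm.measurable
    have hf'meas : Measurable[mΩ] f' := hf'measG.mono hG le_rfl
    have hf'aesm : AEStronglyMeasurable[mΩ] f' μ :=
      hf'meas.stronglyMeasurable.aestronglyMeasurable
    have hfL2 : MemLp (f : Ω → ℝ) 2 μ := Lp.memLp f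
    -- Step A : ∫ w f = 0
    have hwf' : IndepFun w f' μ := by
      rw [IndepFun_iff]
      intro t1 t2 h1 h2
      exact (Indep_iff _ _ _).mp hw_G t1 t2 h1 (measurable_iff_comap_le.mp hf'measG t2 h2)
    have hwf : (∫ ω, w ω * (f : Ω → ℝ) ω ∂μ) = 0 := by
      have h1 : (∫ ω, w ω * (f : Ω → ℝ) ω ∂μ) = ∫ ω, (w * f') ω ∂μ := by
        refine integral_congr_ae ?_
        filter_upwards [hff'] with ω hω
        simp [hω]
      rw [h1]
      have h2 := hwf'.integral_mul_eq_mul_integral hw.aestronglyMeasurable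
        hf'aesm
      rw [h2, hwmean, zero_mul]
    -- Step B : ∫ h f = -(lbar * ∫ z f)
    have hB : (∫ ω, (lam ω * (w ω - z ω)) * (f : Ω → ℝ) ω ∂μ)
        = -(lbar * ∫ ω, z ω * (f : Ω → ℝ) ω ∂μ) := by
      by_cases hqz : (fun ω => w ω - z ω) =ᵐ[μ] 0
      · have hzw : (∫ ω, z ω * (f : Ω → ℝ) ω ∂μ) = ∫ ω, w ω * (f : Ω → ℝ) ω ∂μ := by
          refine integral_congr_ae ?_
          filter_upwards [hqz] with ω hω
          have : w ω = z ω := by simpa [sub_eq_zero] using hω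
          rw [this]
        have hh0 : (∫ ω, (lam ω * (w ω - z ω)) * (f : Ω → ℝ) ω ∂μ) = 0 := by
          have : (fun ω => (lam ω * (w ω - z ω)) * (f : Ω → ℝ) ω) =ᵐ[μ] 0 := by
            filter_upwards [hqz] with ω hω
            have : w ω - z ω = 0 := by simpa using hω
            simp [this]
          rw [integral_congr_ae this]; simp
        rw [hh0, hzw, hwf]
        ring
      · have hlam_aesm : AEStronglyMeasurable[mΩ] lam μ :=
          lam_aesm (G ⊔ MeasurableSpace.comap z inferInstance
              ⊔ MeasurableSpace.comap w inferInstance) μ lam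
            (fun ω => w ω - z ω) (fun ω => lam ω * (w ω - z ω)) hber
            hq2.aestronglyMeasurable hh2.aestronglyMeasurable (fun ω => rfl)
            hq_m' hlam_indep hqz
        have hg_m : Measurable[(G ⊔ MeasurableSpace.comap z inferInstance
            ⊔ MeasurableSpace.comap w inferInstance)] (fun ω => (w ω - z ω) * f' ω) :=
          hq_m'.mul (hf'measG.mono hG_le le_rfl)
        have hg_aesm : AEStronglyMeasurable[mΩ] (fun ω => (w ω - z ω) * f' ω) μ :=
          hq2.aestronglyMeasurable.mul hf'aesm
        have hint := indep_integral_mul (G ⊔ MeasurableSpace.comap z inferInstance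
            ⊔ MeasurableSpace.comap w inferInstance) μ lam
          (fun ω => (w ω - z ω) * f' ω) hlam_aesm hg_aesm hg_m hlam_indep
        have e1 : (∫ ω, (lam ω * (w ω - z ω)) * (f : Ω → ℝ) ω ∂μ)
            = ∫ ω, lam ω * ((w ω - z ω) * f' ω) ∂μ := by
          refine integral_congr_ae ?_
          filter_upwards [hff'] with ω hω
          rw [hω, mul_assoc]
        have e2 : (∫ ω, (w ω - z ω) * f' ω ∂μ)
            = (∫ ω, w ω * (f : Ω → ℝ) ω ∂μ) - ∫ ω, z ω * (f : Ω → ℝ) ω ∂μ := by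
          have e3 : (∫ ω, (w ω - z ω) * f' ω ∂μ)
              = ∫ ω, w ω * (f : Ω → ℝ) ω - z ω * (f : Ω → ℝ) ω ∂μ := by
            refine integral_congr_ae ?_
            filter_upwards [hff'] with ω hω
            rw [hω]; ring
          rw [e3, integral_sub (integrable_mul_L2' hw hfL2) (integrable_mul_L2' hz hfL2)]
        rw [e1, hint, hlmean, e2, hwf]
        ring
    -- Step C : assemble
    have hy_split : (fun ω => ((1 - lam ω) * z ω + lam ω * w ω) * (f : Ω → ℝ) ω)
        = fun ω => z ω * (f : Ω → ℝ) ω + (lam ω * (w ω - z ω)) * (f : Ω → ℝ) ω := by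
      funext ω; ring
    rw [hy_split, integral_add (integrable_mul_L2' hz hfL2) (integrable_mul_L2' hh2 hfL2), hB]
    ring
  -- from the integral identity to the projection identity
  apply Subtype.ext
  rw [Submodule.coe_smul]
  rw [← Submodule.starProjection_apply K (hy.toLp _)]
  apply Submodule.eq_starProjection_of_mem_of_inner_eq_zero
  · exact Submodule.smul_mem _ _ (Submodule.orthogonalProjectionOnto K (hz.toLp z)).2
  · intro f hf
    rw [inner_sub_left, real_inner_smul_left]
    have hPz : (inner ℝ ((Submodule.orthogonalProjectionOnto K (hz.toLp z) : K) : Lp ℝ 2 μ) f : ℝ)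
        = inner ℝ (hz.toLp z) f := by
      have h0 := Submodule.starProjection_inner_eq_zero (K := K) (hz.toLp z) f hf
      rw [Submodule.starProjection_apply] at h0
      rw [inner_sub_left] at h0
      linarith
    rw [hPz]
    have hy_inner : (inner ℝ (hy.toLp _ : Lp ℝ 2 μ) f : ℝ)
        = ∫ ω, ((1 - lam ω) * z ω + lam ω * w ω) * (f : Ω → ℝ) ω ∂μ := by
      rw [L2_real_inner_eq]
      refine integral_congr_ae ?_
      filter_upwards [hy.coeFn_toLp] with ω hω
      rw [hω]
    have hz_inner : (inner ℝ (hz.toLp z : Lp ℝ 2 μ) f : ℝ)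
        = ∫ ω, z ω * (f : Ω → ℝ) ω ∂μ := by
      rw [L2_real_inner_eq]
      refine integral_congr_ae ?_
      filter_upwards [hz.coeFn_toLp] with ω hω
      rw [hω]
    rw [hy_inner, hz_inner, key f hf]
    ring
end

section
/- Let (Ω, F, P) be a probability space and G ⊆ F a sub-σ-algebra. Let g, v be square-integrable real random variables, and let γ be a Bernoulli random variable with mean γ̄ which is independent of the σ-algebra generated by G together with g and v. Let S be a closed linear subspace of L²(Ω, F, P) all of whose elements are G-measurable. Then the orthogonal projection of z := γ g + v onto S equals γ̄ times the orthogonal projection of g onto S plus the orthogonal projection of v onto S. -/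
open MeasureTheory ProbabilityTheory

/-- Two square-integrable functions have an integrable product. -/
lemma integrable_mul_of_memL2 {Ω : Type*} [MeasurableSpace Ω] {μ : Measure Ω}
    {a b : Ω → ℝ} (ha : MemLp a 2 μ) (hb : MemLp b 2 μ) :
    Integrable (fun ω => a ω * b ω) μ := by
  have h : MemLp (a • b) 1 μ := hb.smul ha (hpqr := ⟨by
    norm_num [ENNReal.inv_two_add_inv_two]⟩)
  rw [memLp_one_iff_integrable] at h
  exact h

/-- Let `G ⊆ F` be a sub-σ-algebra, `g`, `v` square-integrable, and `γ` a Bernoulli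
variable with mean `γ̄` independent of the σ-algebra generated by `G` together with
`g` and `v`. For every closed linear subspace `K` of `L²` all of whose elements are
`G`-measurable, the orthogonal projection of `z = γ g + v` onto `K` equals `γ̄` times
the orthogonal projection of `g` onto `K` plus the orthogonal projection of `v`
onto `K`. -/
theorem projection_uncertain_measurement
    {Ω : Type*} [mΩ : MeasurableSpace Ω] (μ : Measure Ω) [IsProbabilityMeasure μ]
    (G : MeasurableSpace Ω) (hG : G ≤ mΩ)
    (g v γ : Ω → ℝ) (γbar : ℝ)
    (hg : MemLp g 2 μ) (hv : MemLp v 2 μ)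
    (hber : ∀ ω, γ ω = 0 ∨ γ ω = 1)
    (hγmean : ∫ ω, γ ω ∂μ = γbar)
    (hγ_indep : Indep (MeasurableSpace.comap γ inferInstance)
      (G ⊔ MeasurableSpace.comap g inferInstance ⊔ MeasurableSpace.comap v inferInstance) μ)
    (K : Submodule ℝ (Lp ℝ 2 μ)) [CompleteSpace K]
    (hK : ∀ f ∈ K, AEStronglyMeasurable[G] (f : Ω → ℝ) μ)
    (hz : MemLp (fun ω => γ ω * g ω + v ω) 2 μ) :
    Submodule.orthogonalProjectionOnto K (hz.toLp _)
      = γbar • Submodule.orthogonalProjectionOnto K (hg.toLp g)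
          + Submodule.orthogonalProjectionOnto K (hv.toLp v) := by
  classical
  letI _instΩ : MeasurableSpace Ω := mΩ
  have hcomapg : MeasurableSpace.comap g inferInstance
      ≤ G ⊔ MeasurableSpace.comap g inferInstance ⊔ MeasurableSpace.comap v inferInstance :=
    le_sup_right.trans le_sup_left
  set φ : Ω → ℝ := fun ω => γ ω * g ω with hφdef
  have hφ : MemLp φ 2 μ := by
    have h := hz.sub hv
    have heq : (fun ω => γ ω * g ω + v ω) - v = φ := by
      funext ω; simp [hφdef]
    rwa [heq] at h
  -- the dichotomy: either `g` vanishes a.e., or `γ` is a.e. strongly measurable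
  have main : (g =ᵐ[μ] 0) ∨ AEStronglyMeasurable γ μ := by
    set t₀ : Set Ω := g ⁻¹' ({0}ᶜ) with ht₀def
    by_cases hg0 : μ t₀ = 0
    · left
      rw [Filter.EventuallyEq, ae_iff]
      have hset : {a | ¬ g a = (0 : Ω → ℝ) a} = t₀ := by
        ext ω; simp [ht₀def]
      rw [hset]; exact hg0
    · right
      set A : Set Ω := γ ⁻¹' {1} with hAdef
      have hAm : MeasurableSet[MeasurableSpace.comap γ inferInstance] A :=
        ⟨{1}, measurableSet_singleton 1, rfl⟩
      have hAcm : MeasurableSet[MeasurableSpace.comap γ inferInstance] Aᶜ := hAm.compl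
      have ht₀m : MeasurableSet[G ⊔ MeasurableSpace.comap g inferInstance
          ⊔ MeasurableSpace.comap v inferInstance] t₀ :=
        hcomapg _ ⟨{0}ᶜ, (measurableSet_singleton 0).compl, rfl⟩
      have h1 : μ (A ∩ t₀) = μ A * μ t₀ :=
        (Indep_iff _ _ μ).mp hγ_indep A t₀ hAm ht₀m
      have h2 : μ (Aᶜ ∩ t₀) = μ Aᶜ * μ t₀ :=
        (Indep_iff _ _ μ).mp hγ_indep Aᶜ t₀ hAcm ht₀m
      -- measurable versions of `g` and `φ`
      set g' : Ω → ℝ := hg.1.mk g with hg'def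
      have hg'm : StronglyMeasurable g' := hg.1.stronglyMeasurable_mk
      have hg'ae : g =ᵐ[μ] g' := hg.1.ae_eq_mk
      set φ' : Ω → ℝ := hφ.1.mk φ with hφ'def
      have hφ'm : StronglyMeasurable φ' := hφ.1.stronglyMeasurable_mk
      have hφ'ae : φ =ᵐ[μ] φ' := hφ.1.ae_eq_mk
      set S : Set Ω := {ω | φ' ω = g' ω} ∩ {ω | g' ω ≠ 0} with hSdef
      set S' : Set Ω := {ω | φ' ω = g' ω}ᶜ ∩ {ω | g' ω ≠ 0} with hS'def
      have hSm : MeasurableSet S :=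
        (measurableSet_eq_fun hφ'm.measurable hg'm.measurable).inter
          (measurableSet_eq_fun hg'm.measurable measurable_const).compl
      have hS'm : MeasurableSet S' :=
        (measurableSet_eq_fun hφ'm.measurable hg'm.measurable).compl.inter
          (measurableSet_eq_fun hg'm.measurable measurable_const).compl
      -- a.e. identifications
      have hAS : (A ∩ t₀ : Set Ω) =ᵐ[μ] S := by
        filter_upwards [hg'ae, hφ'ae] with ω e1 e2
        have hiff : ω ∈ A ∩ t₀ ↔ ω ∈ S := by
          simp only [hAdef, hSdef, Set.mem_inter_iff, Set.mem_preimage,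
            Set.mem_singleton_iff, Set.mem_compl_iff, Set.mem_setOf_eq, ht₀def,
            ← e1, ← e2]
          constructor
          · rintro ⟨hγ1, hgne⟩
            exact ⟨by simp [hφdef, hγ1], hgne⟩
          · rintro ⟨heq, hgne⟩
            rcases hber ω with h0 | h1
            · exfalso; apply hgne; rw [← heq]; simp [hφdef, h0]
            · exact ⟨h1, hgne⟩
        exact propext hiff
      have hAS' : ((Aᶜ ∩ t₀ : Set Ω)) =ᵐ[μ] S' := by
        filter_upwards [hg'ae, hφ'ae] with ω e1 e2
        have hiff : ω ∈ Aᶜ ∩ t₀ ↔ ω ∈ S' := by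
          simp only [hAdef, hS'def, Set.mem_inter_iff, Set.mem_preimage,
            Set.mem_singleton_iff, Set.mem_compl_iff, Set.mem_setOf_eq, ht₀def,
            ← e1, ← e2]
          constructor
          · rintro ⟨hγ1, hgne⟩
            rcases hber ω with h0 | h1
            · refine ⟨fun heq => hgne ?_, hgne⟩
              rw [← heq]; simp [hφdef, h0]
            · exact absurd h1 hγ1
          · rintro ⟨hneq, hgne⟩
            rcases hber ω with h0 | h1
            · exact ⟨by simp [h0], hgne⟩
            · exact absurd (by simp [hφdef, h1]) hneq
        exact propext hiff
      have ht₀S : (t₀ : Set Ω) =ᵐ[μ] {ω | g' ω ≠ 0} := by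
        filter_upwards [hg'ae] with ω e1
        have : ω ∈ t₀ ↔ ω ∈ {ω | g' ω ≠ 0} := by
          simp [ht₀def, Set.mem_preimage, e1]
        exact propext this
      -- the measures add up
      have hdisj : Disjoint S S' := by
        rw [Set.disjoint_iff]
        rintro ω ⟨⟨h1, _⟩, ⟨h2, _⟩⟩
        exact absurd h1 h2
      have hunion : S ∪ S' = {ω | g' ω ≠ 0} := by
        ext ω
        by_cases h : φ' ω = g' ω <;> simp [hSdef, hS'def, h]
      have hsum : μ A * μ t₀ + μ Aᶜ * μ t₀ = μ t₀ := by
        calc μ A * μ t₀ + μ Aᶜ * μ t₀ = μ (A ∩ t₀) + μ (Aᶜ ∩ t₀) := by rw [h1, h2]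
          _ = μ S + μ S' := by rw [measure_congr hAS, measure_congr hAS']
          _ = μ (S ∪ S') := (measure_union hdisj hS'm).symm
          _ = μ {ω | g' ω ≠ 0} := by rw [hunion]
          _ = μ t₀ := (measure_congr ht₀S).symm
      have hμt₀ne : μ t₀ ≠ ⊤ := measure_ne_top μ t₀
      have hAAc : μ A + μ Aᶜ = 1 := by
        have : (μ A + μ Aᶜ) * μ t₀ = 1 * μ t₀ := by
          rw [add_mul, one_mul]; exact hsum
        exact le_antisymm ((ENNReal.mul_le_mul_iff_left hg0 hμt₀ne).mp this.le)
          ((ENNReal.mul_le_mul_iff_left hg0 hμt₀ne).mp this.ge)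
      -- hence `A` is null measurable
      set H : Set Ω := toMeasurable μ A with hHdef
      set H' : Set Ω := toMeasurable μ Aᶜ with hH'def
      have hAH : A ⊆ H := subset_toMeasurable μ A
      have hAcH' : Aᶜ ⊆ H' := subset_toMeasurable μ Aᶜ
      have hHm : MeasurableSet H := measurableSet_toMeasurable μ A
      have hH'm : MeasurableSet H' := measurableSet_toMeasurable μ Aᶜ
      have hHH'univ : μ (H ∪ H') = 1 := by
        refine le_antisymm prob_le_one ?_
        have : (Set.univ : Set Ω) ⊆ H ∪ H' := by
          rw [← Set.union_compl_self A]
          exact Set.union_subset_union hAH hAcH'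
        calc (1 : ENNReal) = μ Set.univ := measure_univ.symm
          _ ≤ μ (H ∪ H') := measure_mono this
      have hinter : μ (H ∩ H') = 0 := by
        have hadd := measure_union_add_inter H hH'm (μ := μ)
        rw [hHH'univ, measure_toMeasurable, measure_toMeasurable, hAAc] at hadd
        have : (1 : ENNReal) + μ (H ∩ H') = 1 + 0 := by rw [add_zero]; exact hadd
        exact (ENNReal.add_right_inj ENNReal.one_ne_top).mp this
      have hγae : γ =ᵐ[μ] (H'ᶜ).indicator (fun _ => (1 : ℝ)) := by
        filter_upwards [measure_eq_zero_iff_ae_notMem.mp hinter] with ω hω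
        rcases hber ω with h0 | h1
        · have hωAc : ω ∈ Aᶜ := by simp [hAdef, h0]
          have : ω ∈ H' := hAcH' hωAc
          simp [Set.indicator_of_notMem, this, h0]
        · have hωA : ω ∈ A := by simp [hAdef, h1]
          have hωH : ω ∈ H := hAH hωA
          have hωH' : ω ∉ H' := fun hc => hω ⟨hωH, hc⟩
          simp [Set.indicator_of_mem, hωH', h1]
      exact ⟨(H'ᶜ).indicator (fun _ => (1 : ℝ)),
        (stronglyMeasurable_const.indicator hH'm.compl), hγae⟩
  -- the key integral identity
  have key : ∀ f : Ω → ℝ, MemLp f 2 μ → AEStronglyMeasurable[G] f μ →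
      ∫ ω, φ ω * f ω ∂μ = γbar * ∫ ω, g ω * f ω ∂μ := by
    intro f hf hfG
    rcases main with hgae | hγm
    · have hφae : φ =ᵐ[μ] 0 := by
        filter_upwards [hgae] with ω hω
        simp [hφdef, hω]
      rw [integral_congr_ae (show (fun ω => φ ω * f ω) =ᵐ[μ] 0 by
            filter_upwards [hφae] with ω hω; simp [hω]),
          integral_congr_ae (show (fun ω => g ω * f ω) =ᵐ[μ] 0 by
            filter_upwards [hgae] with ω hω; simp [hω])]
      simp
    · obtain ⟨f₀, hf₀m, hff₀⟩ := hfG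
      have hf₀ : MemLp f₀ 2 μ := hf.ae_eq hff₀
      have hgf₀_int : Integrable (fun ω => g ω * f₀ ω) μ := integrable_mul_of_memL2 hg hf₀
      have hγ_int : Integrable γ μ := by
        refine (integrable_const (1 : ℝ)).mono' hγm (Filter.Eventually.of_forall fun ω => ?_)
        rcases hber ω with h | h <;> simp [h]
      have hhm : Measurable[G ⊔ MeasurableSpace.comap g inferInstance
          ⊔ MeasurableSpace.comap v inferInstance] fun ω => g ω * f₀ ω := by
        have hgm' : Measurable[MeasurableSpace.comap g inferInstance] g :=
          fun s hs => ⟨s, hs, rfl⟩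
        have hgm : Measurable[G ⊔ MeasurableSpace.comap g inferInstance
            ⊔ MeasurableSpace.comap v inferInstance] g := hgm'.mono hcomapg le_rfl
        have hf₀G : Measurable[G] f₀ := hf₀m.measurable
        have hf₀m' : Measurable[G ⊔ MeasurableSpace.comap g inferInstance
            ⊔ MeasurableSpace.comap v inferInstance] f₀ :=
          hf₀G.mono (le_sup_left.trans le_sup_left) le_rfl
        exact hgm.mul hf₀m'
      have hindep : IndepFun γ (fun ω => g ω * f₀ ω) μ := by
        rw [IndepFun_iff_Indep]
        exact indep_of_indep_of_le_right hγ_indep (measurable_iff_comap_le.mp hhm)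
      have hmul := hindep.integral_mul_eq_mul_integral hγ_int.1 hgf₀_int.1
      calc ∫ ω, φ ω * f ω ∂μ
          = ∫ ω, (γ * fun ω => g ω * f₀ ω) ω ∂μ := by
            refine integral_congr_ae ?_
            filter_upwards [hff₀] with ω hω
            simp [hφdef, hω, mul_assoc]
        _ = (∫ ω, γ ω ∂μ) * ∫ ω, g ω * f₀ ω ∂μ := hmul
        _ = γbar * ∫ ω, g ω * f ω ∂μ := by
            rw [hγmean]
            congr 1
            refine integral_congr_ae ?_
            filter_upwards [hff₀] with ω hω
            rw [hω]
  -- the orthogonality statement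
  have hsub : (hz.toLp _ - (γbar • hg.toLp g + hv.toLp v)) ∈ Kᗮ := by
    rw [Submodule.mem_orthogonal]
    intro u hu
    have hum : MemLp (u : Ω → ℝ) 2 μ := Lp.memLp u
    have huG : AEStronglyMeasurable[G] (u : Ω → ℝ) μ := hK u hu
    have Iuφ : Integrable (fun ω => (u : Ω → ℝ) ω * φ ω) μ := integrable_mul_of_memL2 hum hφ
    have Iuv : Integrable (fun ω => (u : Ω → ℝ) ω * v ω) μ := integrable_mul_of_memL2 hum hv
    have h1 : inner (𝕜 := ℝ) u (hz.toLp _)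
        = ∫ ω, (u : Ω → ℝ) ω * (γ ω * g ω + v ω) ∂μ := by
      rw [L2.inner_def]
      refine integral_congr_ae ?_
      filter_upwards [hz.coeFn_toLp] with ω hω
      rw [hω]
      simp [RCLike.inner_apply, mul_comm]
    have h2 : inner (𝕜 := ℝ) u (hg.toLp g) = ∫ ω, (u : Ω → ℝ) ω * g ω ∂μ := by
      rw [L2.inner_def]
      refine integral_congr_ae ?_
      filter_upwards [hg.coeFn_toLp] with ω hω
      rw [hω]
      simp [RCLike.inner_apply, mul_comm]
    have h3 : inner (𝕜 := ℝ) u (hv.toLp v) = ∫ ω, (u : Ω → ℝ) ω * v ω ∂μ := by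
      rw [L2.inner_def]
      refine integral_congr_ae ?_
      filter_upwards [hv.coeFn_toLp] with ω hω
      rw [hω]
      simp [RCLike.inner_apply, mul_comm]
    have hsplit : ∫ ω, (u : Ω → ℝ) ω * (γ ω * g ω + v ω) ∂μ
        = (∫ ω, (u : Ω → ℝ) ω * φ ω ∂μ) + ∫ ω, (u : Ω → ℝ) ω * v ω ∂μ := by
      rw [← integral_add Iuφ Iuv]
      refine integral_congr_ae (Filter.Eventually.of_forall fun ω => ?_)
      simp [hφdef]; ring
    have hkey := key (u : Ω → ℝ) hum huG
    rw [inner_sub_right, inner_add_right, inner_smul_right, h1, h2, h3, hsplit]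
    have e1 : ∫ ω, (u : Ω → ℝ) ω * φ ω ∂μ = ∫ ω, φ ω * (u : Ω → ℝ) ω ∂μ := by
      refine integral_congr_ae (Filter.Eventually.of_forall fun ω => ?_)
      ring
    have e2 : ∫ ω, (u : Ω → ℝ) ω * g ω ∂μ = ∫ ω, g ω * (u : Ω → ℝ) ω ∂μ := by
      refine integral_congr_ae (Filter.Eventually.of_forall fun ω => ?_)
      ring
    rw [e1, e2] at *
    rw [hkey]
    ring
  have h0 : Submodule.orthogonalProjectionOnto K (hz.toLp _ - (γbar • hg.toLp g + hv.toLp v)) = 0 :=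
    Submodule.orthogonalProjectionOnto_apply_of_mem_orthogonal hsub
  have hfin : Submodule.orthogonalProjectionOnto K (hz.toLp _)
      - (γbar • Submodule.orthogonalProjectionOnto K (hg.toLp g) + Submodule.orthogonalProjectionOnto K (hv.toLp v)) = 0 := by
    rw [← _root_.map_smul, ← _root_.map_add, ← _root_.map_sub]
    exact h0
  exact eq_of_sub_eq_zero hfin
end
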